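/- In the neural setup with n ≥ 1, assume E[X_j⁴] < ∞ for every j ∈ {1, …, d}. For k ∈ {1,2,3,4}, let j^k = (j^k_0, j^k_1, …, j^k_n) be sequences with entries in {1, …, d}, and set P = (∏_{i=1}^n Θ^{(i)}_{j^1_{i−1} j^1_i}) X_{j^1_n} · (∏_{i=1}^n Θ^{(i)}_{j^2_{i−1} j^2_i}) X_{j^2_n} and Q = (∏_{i=1}^n Θ^{(i)}_{j^3_{i−1} j^3_i}) X_{j^3_n} · (∏_{i=1}^n Θ^{(i)}_{j^4_{i−1} j^4_i}) X_{j^4_n}. If the tuple (j¹, j², j³, j⁴) is not bad, then Cov(P, Q) = 0. -/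

import Mathlib

/-!
STATEMENT 15: In the neural setup with `n ≥ 1`, assume `E[X_j⁴] < ∞` for every `j`. For
sequences `j^k = (j^k_0, …, j^k_n)` with entries in `{1, …, d}` (`k ∈ {1,2,3,4}`), set
`P = (∏_i Θ^{(i)}_{j^1_{i−1} j^1_i}) X_{j^1_n} · (∏_i Θ^{(i)}_{j^2_{i−1} j^2_i}) X_{j^2_n}`
and `Q = (∏_i Θ^{(i)}_{j^3_{i−1} j^3_i}) X_{j^3_n} · (∏_i Θ^{(i)}_{j^4_{i−1} j^4_i}) X_{j^4_n}`.
If the tuple `(j¹, j², j³, j⁴)` is not bad, then `Cov(P, Q) = 0`.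
-/

open MeasureTheory ProbabilityTheory
open scoped NNReal

/-! ### Auxiliary lemmas -/

/-- The integral of a finite product of independent, integrable random variables is the
product of the integrals (and the product is integrable). -/
lemma prod_indep_integral_aux {Ω : Type*} [MeasurableSpace Ω] {μ : Measure Ω}
    [IsProbabilityMeasure μ] {ι : Type*} {f : ι → Ω → ℝ}
    (hindep : iIndepFun f μ) (hmeas : ∀ i, Measurable (f i))
    (hint : ∀ i, Integrable (f i) μ) (s : Finset ι) :
    Integrable (fun ω => ∏ i ∈ s, f i ω) μ ∧
      (∫ ω, ∏ i ∈ s, f i ω ∂μ) = ∏ i ∈ s, ∫ ω, f i ω ∂μ := by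
  classical
  induction s using Finset.induction_on with
  | empty => simp
  | insert a s ha ih =>
    have key : (fun ω => ∏ i ∈ insert a s, f i ω) = (∏ j ∈ s, f j) * f a := by
      ext ω
      simp [Finset.prod_insert ha, Finset.prod_apply, mul_comm]
    have hps : Integrable (∏ j ∈ s, f j) μ := by
      have h1 := ih.1
      have : (fun ω => ∏ i ∈ s, f i ω) = ∏ j ∈ s, f j := by
        ext ω; simp [Finset.prod_apply]
      rwa [this] at h1
    have hI : IndepFun (∏ j ∈ s, f j) (f a) μ :=
      hindep.indepFun_finsetProd_of_notMem hmeas ha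
    have hint2 : Integrable ((∏ j ∈ s, f j) * f a) μ := hI.integrable_mul hps (hint a)
    constructor
    · rw [key]; exact hint2
    · have := hI.integral_mul_eq_mul_integral hps.aestronglyMeasurable (hint a).aestronglyMeasurable
      calc (∫ ω, ∏ i ∈ insert a s, f i ω ∂μ) = ∫ ω, ((∏ j ∈ s, f j) * f a) ω ∂μ := by
            rw [← key]
        _ = (∫ ω, (∏ j ∈ s, f j) ω ∂μ) * ∫ ω, f a ω ∂μ := this
        _ = (∏ i ∈ s, ∫ ω, f i ω ∂μ) * ∫ ω, f a ω ∂μ := by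
            congr 1
            have : (fun ω => (∏ j ∈ s, f j) ω) = fun ω => ∏ i ∈ s, f i ω := by
              ext ω; simp [Finset.prod_apply]
            rw [this, ih.2]
        _ = ∏ i ∈ insert a s, ∫ ω, f i ω ∂μ := by rw [Finset.prod_insert ha, mul_comm]

lemma exp_ge_sq_div_four_aux {t : ℝ} (ht : 0 ≤ t) : t ^ 2 / 4 ≤ Real.exp t := by
  have h1 : t / 2 + 1 ≤ Real.exp (t / 2) := Real.add_one_le_exp _
  have h2 : Real.exp (t / 2) * Real.exp (t / 2) = Real.exp t := by
    rw [← Real.exp_add]; ring_nf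
  nlinarith [Real.exp_pos (t / 2), sq_nonneg t]

lemma integrable_pow_four_gaussianReal_aux {v : ℝ≥0} (hv : v ≠ 0) :
    Integrable (fun x : ℝ => x ^ 4) (gaussianReal 0 v) := by
  rw [gaussianReal_of_var_ne_zero 0 hv,
    integrable_withDensity_iff (measurable_gaussianPDF 0 v)
      (Filter.Eventually.of_forall fun x => ENNReal.ofReal_lt_top)]
  have hv' : (0 : ℝ) < (v : ℝ) := by positivity
  set C : ℝ := (Real.sqrt (2 * Real.pi * v))⁻¹ with hC
  have hC0 : 0 ≤ C := by positivity
  set b : ℝ := (2 * (v : ℝ))⁻¹ with hb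
  have hb0 : 0 < b := by positivity
  have hpdf : ∀ x : ℝ, ((gaussianPDF 0 v x).toReal) = C * Real.exp (-(b * x ^ 2)) := by
    intro x
    rw [gaussianPDF, ENNReal.toReal_ofReal (gaussianPDFReal_nonneg _ _ _), gaussianPDFReal]
    have harg : -(x - 0) ^ 2 / (2 * (v : ℝ)) = -(b * x ^ 2) := by
      rw [hb]; field_simp; ring
    rw [harg]
  have hint : Integrable (fun x : ℝ => C * (16 / b ^ 2) * Real.exp (-(b/2) * x ^ 2)) := by
    exact (integrable_exp_neg_mul_sq (by positivity)).const_mul _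
  refine hint.mono' ?_ (Filter.Eventually.of_forall fun x => ?_)
  · exact ((measurable_id.pow_const 4).mul
      ((measurable_gaussianPDF 0 v).ennreal_toReal)).aestronglyMeasurable
  · rw [hpdf x]
    have h4 : (0:ℝ) ≤ x ^ 4 := by positivity
    have hkey : ((b/2) * x ^ 2) ^ 2 / 4 ≤ Real.exp ((b/2) * x ^ 2) :=
      exp_ge_sq_div_four_aux (by positivity)
    have hee : Real.exp ((b/2) * x^2) * Real.exp (-(b * x^2)) = Real.exp (-(b/2) * x^2) := by
      rw [← Real.exp_add]; ring_nf
    have hnorm : ‖x ^ 4 * (C * Real.exp (-(b * x ^ 2)))‖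
        = x ^ 4 * C * Real.exp (-(b * x ^ 2)) := by
      rw [Real.norm_eq_abs, abs_of_nonneg]
      · ring
      · positivity
    rw [hnorm]
    have hx4 : x ^ 4 ≤ (16 / b ^ 2) * Real.exp ((b/2) * x ^ 2) := by
      have hb2 : 0 < b ^ 2 := by positivity
      rw [div_mul_eq_mul_div, le_div_iff₀ hb2]
      nlinarith [hkey]
    calc x ^ 4 * C * Real.exp (-(b * x ^ 2))
        ≤ (16 / b ^ 2) * Real.exp ((b/2) * x ^ 2) * C * Real.exp (-(b * x ^ 2)) := by
          have := Real.exp_pos (-(b * x ^ 2))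
          nlinarith [mul_le_mul_of_nonneg_right hx4 hC0]
      _ = C * (16 / b ^ 2) * Real.exp (-(b/2) * x ^ 2) := by rw [← hee]; ring

lemma integrable_pow_gaussianReal_aux {v : ℝ≥0} (hv : v ≠ 0) {m : ℕ} (hm : m ≤ 4) :
    Integrable (fun x : ℝ => x ^ m) (gaussianReal 0 v) := by
  have h4 := integrable_pow_four_gaussianReal_aux hv
  refine ((integrable_const (1:ℝ)).add h4).mono'
    (measurable_id.pow_const m).aestronglyMeasurable
    (Filter.Eventually.of_forall fun x => ?_)
  rw [Real.norm_eq_abs, abs_pow]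
  have hx4 : |x| ^ 4 = x ^ 4 := by
    rw [← abs_pow, abs_of_nonneg (by positivity)]
  rcases le_or_gt |x| 1 with h | h
  · have hp : |x| ^ m ≤ 1 := pow_le_one₀ (abs_nonneg x) h
    have h0 : (0:ℝ) ≤ x ^ 4 := by positivity
    simp only [Pi.add_apply]
    linarith
  · have h1 : |x| ^ m ≤ |x| ^ 4 := pow_le_pow_right₀ h.le hm
    simp only [Pi.add_apply]
    rw [hx4] at h1
    linarith

lemma integral_pow_gaussianReal_odd_aux {v : ℝ≥0} {m : ℕ} (hm : Odd m) :
    ∫ x, x ^ m ∂(gaussianReal 0 v) = 0 := by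
  have hmap : (gaussianReal 0 v).map (fun x => -x) = gaussianReal 0 v := by
    have h := gaussianReal_map_const_mul (μ := 0) (v := v) (-1)
    simp only [neg_one_mul, mul_zero] at h
    rw [h]
    congr 1
    ext
    norm_num
  have h1 : ∫ x, x ^ m ∂(gaussianReal 0 v) = ∫ x, (-x) ^ m ∂(gaussianReal 0 v) := by
    conv_lhs => rw [← hmap]
    have hme : AEStronglyMeasurable (fun x : ℝ => x ^ m)
        ((gaussianReal 0 v).map (fun x => -x)) :=
      (measurable_id.pow_const m).aestronglyMeasurable
    exact integral_map measurable_neg.aemeasurable hme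
  have h2 : ∀ x : ℝ, (-x) ^ m = -(x ^ m) := fun x => hm.neg_pow x
  simp_rw [h2, integral_neg] at h1
  linarith

noncomputable section

variable {Ω : Type*} [MeasurableSpace Ω]

/-- The product `(∏_{i=1}^n Θ^{(i)}_{a_{i−1} a_i}) X_{a_n} · (∏_{i=1}^n Θ^{(i)}_{b_{i−1} b_i}) X_{b_n}`
along two paths `a` and `b`. -/
def pathProd (d n : ℕ) (Θ : Fin n → Ω → Matrix (Fin d) (Fin d) ℝ)
    (X : Fin d → Ω → ℝ) (a b : Fin (n + 1) → Fin d) (ω : Ω) : ℝ :=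
  ((∏ i : Fin n, Θ i ω (a i.castSucc) (a i.succ)) * X (a (Fin.last n)) ω) *
    ((∏ i : Fin n, Θ i ω (b i.castSucc) (b i.succ)) * X (b (Fin.last n)) ω)

/-- At one step, the four pairs of consecutive values can be split into two disjoint pairs
that agree both at time `i` and at time `i+1`. -/
def StepOK {d : ℕ} (u v : Fin 4 → Fin d) : Prop :=
  ∃ p q r s : Fin 4, ({p, q, r, s} : Finset (Fin 4)) = Finset.univ ∧
    u p = u q ∧ v p = v q ∧ u r = u s ∧ v r = v s

/-- A tuple of four sequences `j k : Fin (n+1) → Fin d` is bad if the pairing condition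
holds at every step `i ∈ {0, …, n−1}`. -/
def IsBad (d n : ℕ) (j : Fin 4 → Fin (n + 1) → Fin d) : Prop :=
  ∀ i : Fin n, StepOK (fun k => j k i.castSucc) (fun k => j k i.succ)

lemma stepOK_of_forall_even_aux {d : ℕ} (u v : Fin 4 → Fin d)
    (h : ∀ k0 : Fin 4,
      Even (Finset.univ.filter (fun k => (u k, v k) = (u k0, v k0))).card) :
    StepOK u v := by
  classical
  set E : Fin 4 → Fin d × Fin d := fun k => (u k, v k) with hE
  set c0 : Finset (Fin 4) := Finset.univ.filter (fun k => E k = E 0) with hc0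
  have h0mem : (0 : Fin 4) ∈ c0 := by simp [hc0]
  have heven : Even c0.card := h 0
  have hle : c0.card ≤ 4 := le_trans (Finset.card_le_univ _) (by simp)
  have hpos : 0 < c0.card := Finset.card_pos.2 ⟨0, h0mem⟩
  have hcard : c0.card = 2 ∨ c0.card = 4 := by
    rw [Nat.even_iff] at heven; omega
  rcases hcard with hc2 | hc4
  · obtain ⟨a, b, hab, habs⟩ := Finset.card_eq_two.mp hc2
    obtain ⟨q, hq0, hc0q⟩ : ∃ q : Fin 4, q ≠ 0 ∧ c0 = {0, q} := by
      rw [habs] at h0mem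
      rcases Finset.mem_insert.mp h0mem with h0 | h0
      · exact ⟨b, fun hb => hab (h0 ▸ hb ▸ rfl), by rw [habs, ← h0]⟩
      · rw [Finset.mem_singleton] at h0
        exact ⟨a, fun ha => hab (h0 ▸ ha ▸ rfl), by rw [habs, ← h0, Finset.pair_comm]⟩
    set D : Finset (Fin 4) := Finset.univ \ c0 with hD
    have hDcard : D.card = 2 := by
      rw [hD, Finset.card_sdiff_of_subset (Finset.subset_univ _), hc2]
      simp
    obtain ⟨r, s, hrs, hDrs⟩ := Finset.card_eq_two.mp hDcard
    have hrD : r ∈ D := by rw [hDrs]; simp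
    have hsD : s ∈ D := by rw [hDrs]; simp
    have hrc0 : r ∉ c0 := (Finset.mem_sdiff.mp hrD).2
    set cr : Finset (Fin 4) := Finset.univ.filter (fun k => E k = E r) with hcr
    have hrcr : r ∈ cr := by simp [hcr]
    have hsub : cr ⊆ D := by
      intro k hk
      rw [hcr, Finset.mem_filter] at hk
      rw [hD, Finset.mem_sdiff]
      refine ⟨Finset.mem_univ _, fun hkc0 => hrc0 ?_⟩
      rw [hc0, Finset.mem_filter] at hkc0
      rw [hc0, Finset.mem_filter]
      exact ⟨Finset.mem_univ _, hk.2 ▸ hkc0.2⟩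
    have hcreven : Even cr.card := h r
    have hcrpos : 0 < cr.card := Finset.card_pos.2 ⟨r, hrcr⟩
    have hcrle : cr.card ≤ 2 := hDcard ▸ Finset.card_le_card hsub
    have hcr2 : cr.card = 2 := by rw [Nat.even_iff] at hcreven; omega
    have hcrD : cr = D := Finset.eq_of_subset_of_card_le hsub (by omega)
    have hsE : E s = E r := by
      have : s ∈ cr := hcrD ▸ hsD
      rw [hcr, Finset.mem_filter] at this
      exact this.2
    have hqE : E q = E 0 := by
      have : q ∈ c0 := by rw [hc0q]; simp
      rw [hc0, Finset.mem_filter] at this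
      exact this.2
    refine ⟨0, q, r, s, ?_, ?_, ?_, ?_, ?_⟩
    · have huniv : ({0, q, r, s} : Finset (Fin 4)) = {0, q} ∪ {r, s} := by
        ext k
        simp only [Finset.mem_insert, Finset.mem_union, Finset.mem_singleton]
        tauto
      rw [huniv, ← hc0q, ← hDrs, hD, Finset.union_sdiff_of_subset (Finset.subset_univ _)]
    · exact congrArg Prod.fst hqE.symm
    · exact congrArg Prod.snd hqE.symm
    · exact congrArg Prod.fst hsE.symm
    · exact congrArg Prod.snd hsE.symm
  · have huniv : c0 = Finset.univ := Finset.eq_univ_of_card _ (by simp [hc4])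
    have hall : ∀ k : Fin 4, E k = E 0 := by
      intro k
      have : k ∈ c0 := huniv ▸ Finset.mem_univ k
      rw [hc0, Finset.mem_filter] at this
      exact this.2
    refine ⟨0, 1, 2, 3, by decide, ?_, ?_, ?_, ?_⟩
    · exact congrArg Prod.fst (hall 1).symm
    · exact congrArg Prod.snd (hall 1).symm
    · exact congrArg Prod.fst ((hall 2).trans (hall 3).symm)
    · exact congrArg Prod.snd ((hall 2).trans (hall 3).symm)

/-- The product of the matrix entries along path `k`. -/
def pathA (d n : ℕ) (Θ : Fin n → Ω → Matrix (Fin d) (Fin d) ℝ)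
    (j : Fin 4 → Fin (n + 1) → Fin d) (k : Fin 4) (ω : Ω) : ℝ :=
  ∏ i : Fin n, Θ i ω (j k i.castSucc) (j k i.succ)

/-- The entry index used by path `x.1` at step `x.2`. -/
def edgeE (d n : ℕ) (j : Fin 4 → Fin (n + 1) → Fin d) (x : Fin 4 × Fin n) :
    Fin n × Fin d × Fin d :=
  (x.2, j x.1 x.2.castSucc, j x.1 x.2.succ)

/-- The multiplicity of the entry index `p` among the edges used by the paths in `S`. -/
def multE (d n : ℕ) (j : Fin 4 → Fin (n + 1) → Fin d) (S : Finset (Fin 4))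
    (p : Fin n × Fin d × Fin d) : ℕ :=
  ((S ×ˢ Finset.univ).filter fun x => edgeE d n j x = p).card

theorem cov_pathProd_eq_zero_of_not_bad (μ : Measure Ω) [IsProbabilityMeasure μ]
    (d n : ℕ) (hd : 0 < d) (hn : 1 ≤ n)
    (Θ : Fin n → Ω → Matrix (Fin d) (Fin d) ℝ) (X : Fin d → Ω → ℝ)
    (hΘmeas : ∀ i a b, Measurable fun ω => Θ i ω a b)
    (hXmeas : ∀ j, Measurable (X j))
    (hentries : iIndepFun
      (fun p : Fin n × Fin d × Fin d => fun ω => Θ p.1 ω p.2.1 p.2.2) μ)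
    (hgauss : ∀ i a b, Measure.map (fun ω => Θ i ω a b) μ = gaussianReal 0 (d : ℝ≥0)⁻¹)
    (hindepX : IndepFun (fun ω => fun p : Fin n × Fin d × Fin d => Θ p.1 ω p.2.1 p.2.2)
      (fun ω (j : Fin d) => X j ω) μ)
    (hX4 : ∀ j, Integrable (fun ω => (X j ω) ^ 4) μ)
    (j : Fin 4 → Fin (n + 1) → Fin d)
    (hnotbad : ¬ IsBad d n j) :
    (∫ ω, pathProd d n Θ X (j 0) (j 1) ω * pathProd d n Θ X (j 2) (j 3) ω ∂μ)
        - (∫ ω, pathProd d n Θ X (j 0) (j 1) ω ∂μ)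
          * (∫ ω, pathProd d n Θ X (j 2) (j 3) ω ∂μ) = 0 := by
  classical
  have hvne : ((d : ℝ≥0))⁻¹ ≠ 0 := by
    simp only [ne_eq, inv_eq_zero, Nat.cast_eq_zero]
    omega
  -- measurability of the vectors
  have hTmeas : Measurable (fun ω => fun p : Fin n × Fin d × Fin d => Θ p.1 ω p.2.1 p.2.2) :=
    measurable_pi_lambda _ fun p => hΘmeas p.1 p.2.1 p.2.2
  have hXVmeas : Measurable (fun ω => fun k : Fin d => X k ω) :=
    measurable_pi_lambda _ fun k => hXmeas k
  have hAmeas : ∀ k, Measurable (pathA d n Θ j k) := fun k =>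
    Finset.measurable_prod _ fun i _ => hΘmeas i _ _
  -- Step 1 : splitting off the X part
  have hsplit : ∀ S : Finset (Fin 4),
      (∫ ω, (∏ k ∈ S, pathA d n Θ j k ω) * (∏ k ∈ S, X (j k (Fin.last n)) ω) ∂μ)
        = (∫ ω, ∏ k ∈ S, pathA d n Θ j k ω ∂μ)
          * ∫ ω, ∏ k ∈ S, X (j k (Fin.last n)) ω ∂μ := by
    intro S
    have hφ : Measurable (fun t : Fin n × Fin d × Fin d → ℝ =>
        ∏ k ∈ S, ∏ i : Fin n, t (edgeE d n j (k, i))) :=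
      Finset.measurable_prod _ fun k _ =>
        Finset.measurable_prod _ fun i _ => measurable_pi_apply _
    have hψ : Measurable (fun x : Fin d → ℝ => ∏ k ∈ S, x (j k (Fin.last n))) :=
      Finset.measurable_prod _ fun k _ => measurable_pi_apply _
    have hcomp := hindepX.comp hφ hψ
    exact hcomp.integral_mul_eq_mul_integral ((hφ.comp hTmeas).aestronglyMeasurable)
      ((hψ.comp hXVmeas).aestronglyMeasurable)
  -- Step 2 : factorization of the Θ part via independence
  have hfact : ∀ S : Finset (Fin 4),
      (∫ ω, ∏ k ∈ S, pathA d n Θ j k ω ∂μ)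
        = ∏ p ∈ (S ×ˢ Finset.univ).image (edgeE d n j),
            ∫ x, x ^ (multE d n j S p) ∂(gaussianReal 0 (d : ℝ≥0)⁻¹) := by
    intro S
    have hrw : ∀ ω, (∏ k ∈ S, pathA d n Θ j k ω)
        = ∏ p ∈ (S ×ˢ Finset.univ).image (edgeE d n j),
            (Θ p.1 ω p.2.1 p.2.2) ^ (multE d n j S p) := by
      intro ω
      calc (∏ k ∈ S, pathA d n Θ j k ω)
          = ∏ x ∈ S ×ˢ (Finset.univ : Finset (Fin n)),
              (fun p : Fin n × Fin d × Fin d => Θ p.1 ω p.2.1 p.2.2) (edgeE d n j x) :=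
            (Finset.prod_product (s := S) (t := Finset.univ)
              (f := fun x => (fun p : Fin n × Fin d × Fin d => Θ p.1 ω p.2.1 p.2.2)
                (edgeE d n j x))).symm
        _ = _ := Finset.prod_comp
              (fun p : Fin n × Fin d × Fin d => Θ p.1 ω p.2.1 p.2.2) (edgeE d n j)
    have hmle : ∀ p, multE d n j S p ≤ 4 := by
      intro p
      have hsub : ((S ×ˢ (Finset.univ : Finset (Fin n))).filter fun x => edgeE d n j x = p)
          ⊆ S ×ˢ ({p.1} : Finset (Fin n)) := by
        intro x hx
        rw [Finset.mem_filter] at hx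
        rw [Finset.mem_product]
        refine ⟨(Finset.mem_product.mp hx.1).1, Finset.mem_singleton.2 ?_⟩
        exact congrArg Prod.fst hx.2
      calc multE d n j S p ≤ (S ×ˢ ({p.1} : Finset (Fin n))).card :=
            Finset.card_le_card hsub
        _ = S.card * 1 := by rw [Finset.card_product, Finset.card_singleton]
        _ ≤ 4 * 1 := by
            have h1 : S.card ≤ Fintype.card (Fin 4) := Finset.card_le_univ S
            simp only [Fintype.card_fin] at h1
            omega
        _ = 4 := by norm_num
    have hfam : iIndepFun
        (fun p : Fin n × Fin d × Fin d => fun ω => (Θ p.1 ω p.2.1 p.2.2) ^ (multE d n j S p))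
        μ :=
      hentries.comp (fun p x => x ^ multE d n j S p)
        (fun p => measurable_id.pow_const _)
    have hm : ∀ p : Fin n × Fin d × Fin d,
        Measurable fun ω => (Θ p.1 ω p.2.1 p.2.2) ^ multE d n j S p := fun p =>
      (hΘmeas p.1 p.2.1 p.2.2).pow_const _
    have hi : ∀ p : Fin n × Fin d × Fin d,
        Integrable (fun ω => (Θ p.1 ω p.2.1 p.2.2) ^ multE d n j S p) μ := by
      intro p
      have hγint : Integrable (fun x : ℝ => x ^ multE d n j S p)
          (gaussianReal 0 (d : ℝ≥0)⁻¹) := integrable_pow_gaussianReal_aux hvne (hmle p)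
      have hme : AEStronglyMeasurable (fun x : ℝ => x ^ multE d n j S p)
          (Measure.map (fun ω => Θ p.1 ω p.2.1 p.2.2) μ) :=
        (measurable_id.pow_const _).aestronglyMeasurable
      have := (integrable_map_measure hme (hΘmeas p.1 p.2.1 p.2.2).aemeasurable).mp
        (by rw [hgauss p.1 p.2.1 p.2.2]; exact hγint)
      exact this
    calc (∫ ω, ∏ k ∈ S, pathA d n Θ j k ω ∂μ)
        = ∫ ω, ∏ p ∈ (S ×ˢ Finset.univ).image (edgeE d n j),
            (Θ p.1 ω p.2.1 p.2.2) ^ (multE d n j S p) ∂μ :=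
          integral_congr_ae (Filter.Eventually.of_forall hrw)
      _ = ∏ p ∈ (S ×ˢ Finset.univ).image (edgeE d n j),
            ∫ ω, (Θ p.1 ω p.2.1 p.2.2) ^ (multE d n j S p) ∂μ :=
          (prod_indep_integral_aux hfam hm hi _).2
      _ = _ := by
          refine Finset.prod_congr rfl fun p _ => ?_
          rw [← hgauss p.1 p.2.1 p.2.2]
          exact (integral_map (hΘmeas p.1 p.2.1 p.2.2).aemeasurable
            (measurable_id.pow_const _).aestronglyMeasurable).symm
  -- Step 3 : a factor with odd multiplicity makes the Θ-integral vanish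
  have hzero : ∀ (S : Finset (Fin 4)) (x : Fin 4 × Fin n), x ∈ S ×ˢ Finset.univ →
      Odd (multE d n j S (edgeE d n j x)) →
      (∫ ω, ∏ k ∈ S, pathA d n Θ j k ω ∂μ) = 0 := by
    intro S x hx hodd
    rw [hfact S]
    exact Finset.prod_eq_zero (Finset.mem_image_of_mem _ hx)
      (integral_pow_gaussianReal_odd_aux hodd)
  -- Step 4 : the Θ-integral over all four paths vanishes
  obtain ⟨i0, hi0⟩ : ∃ i0 : Fin n, ¬ StepOK (fun k => j k i0.castSucc) (fun k => j k i0.succ) := by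
    by_contra hcon
    push_neg at hcon
    exact hnotbad hcon
  obtain ⟨k0, hk0⟩ : ∃ k0 : Fin 4, ¬ Even ((Finset.univ.filter
      (fun k : Fin 4 => (j k i0.castSucc, j k i0.succ)
        = (j k0 i0.castSucc, j k0 i0.succ))).card) := by
    by_contra hcon
    push_neg at hcon
    exact hi0 (stepOK_of_forall_even_aux _ _ hcon)
  have hsetuniv : ((Finset.univ ×ˢ Finset.univ).filter
        fun x => edgeE d n j x = edgeE d n j (k0, i0))
      = (Finset.univ.filter (fun k : Fin 4 => (j k i0.castSucc, j k i0.succ)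
          = (j k0 i0.castSucc, j k0 i0.succ))) ×ˢ ({i0} : Finset (Fin n)) := by
    ext x
    obtain ⟨k, i⟩ := x
    simp only [Finset.mem_filter, Finset.mem_product, Finset.mem_univ, true_and,
      Finset.mem_singleton, edgeE, Prod.mk.injEq]
    constructor
    · rintro ⟨hi, hc, hs⟩
      subst hi
      exact ⟨⟨hc, hs⟩, rfl⟩
    · rintro ⟨⟨hc, hs⟩, hi⟩
      subst hi
      exact ⟨rfl, hc, hs⟩
  have hPQzero : (∫ ω, ∏ k ∈ (Finset.univ : Finset (Fin 4)), pathA d n Θ j k ω ∂μ) = 0 := by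
    refine hzero Finset.univ (k0, i0) (by simp) ?_
    have hmult : multE d n j Finset.univ (edgeE d n j (k0, i0))
        = (Finset.univ.filter (fun k : Fin 4 => (j k i0.castSucc, j k i0.succ)
            = (j k0 i0.castSucc, j k0 i0.succ))).card := by
      rw [multE, hsetuniv, Finset.card_product, Finset.card_singleton, mul_one]
    rw [hmult]
    exact Nat.not_even_iff_odd.mp hk0
  -- Step 5 : pair contributions
  have hpairzero : ∀ (a b : Fin 4), a ≠ b → ∀ i : Fin n,
      (j a i.castSucc, j a i.succ) ≠ (j b i.castSucc, j b i.succ) →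
      (∫ ω, ∏ k ∈ ({a, b} : Finset (Fin 4)), pathA d n Θ j k ω ∂μ) = 0 := by
    intro a b hab i hne
    refine hzero {a, b} (a, i) (by simp) ?_
    have hset : ((({a, b} : Finset (Fin 4)) ×ˢ Finset.univ).filter
        fun x => edgeE d n j x = edgeE d n j (a, i)) = {(a, i)} := by
      ext x
      obtain ⟨k, i'⟩ := x
      simp only [Finset.mem_filter, Finset.mem_product, Finset.mem_insert,
        Finset.mem_singleton, Finset.mem_univ, and_true, edgeE, Prod.mk.injEq]
      constructor
      · rintro ⟨hk, hi, hc, hs⟩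
        subst hi
        rcases hk with hk | hk
        · exact ⟨hk, rfl⟩
        · subst hk
          exact absurd (Prod.ext hc hs).symm hne
      · rintro ⟨hk, hi⟩
        subst hk; subst hi
        exact ⟨Or.inl rfl, rfl, rfl, rfl⟩
    have hmult : multE d n j {a, b} (edgeE d n j (a, i)) = 1 := by
      rw [multE, hset, Finset.card_singleton]
    rw [hmult]
    exact odd_one
  have key01 : (∫ ω, ∏ k ∈ ({0, 1} : Finset (Fin 4)), pathA d n Θ j k ω ∂μ) ≠ 0 →
      ∀ i : Fin n, (j 0 i.castSucc, j 0 i.succ) = (j 1 i.castSucc, j 1 i.succ) := by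
    intro hI i
    by_contra hne
    exact hI (hpairzero 0 1 (by decide) i hne)
  have key23 : (∫ ω, ∏ k ∈ ({2, 3} : Finset (Fin 4)), pathA d n Θ j k ω ∂μ) ≠ 0 →
      ∀ i : Fin n, (j 2 i.castSucc, j 2 i.succ) = (j 3 i.castSucc, j 3 i.succ) := by
    intro hI i
    by_contra hne
    exact hI (hpairzero 2 3 (by decide) i hne)
  have hPor : (∫ ω, ∏ k ∈ ({0, 1} : Finset (Fin 4)), pathA d n Θ j k ω ∂μ) = 0 ∨
      (∫ ω, ∏ k ∈ ({2, 3} : Finset (Fin 4)), pathA d n Θ j k ω ∂μ) = 0 := by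
    by_contra hcon
    push_neg at hcon
    refine hnotbad fun i => ?_
    have e1 := key01 hcon.1 i
    have e2 := key23 hcon.2 i
    exact ⟨0, 1, 2, 3, by decide,
      congrArg Prod.fst e1, congrArg Prod.snd e1,
      congrArg Prod.fst e2, congrArg Prod.snd e2⟩
  -- Step 6 : pointwise identification of the integrands
  have hPQ : ∀ ω, pathProd d n Θ X (j 0) (j 1) ω * pathProd d n Θ X (j 2) (j 3) ω
      = (∏ k ∈ (Finset.univ : Finset (Fin 4)), pathA d n Θ j k ω)
        * (∏ k ∈ (Finset.univ : Finset (Fin 4)), X (j k (Fin.last n)) ω) := by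
    intro ω
    rw [Fin.prod_univ_four, Fin.prod_univ_four]
    simp only [pathProd, pathA]
    ring
  have hP : ∀ ω, pathProd d n Θ X (j 0) (j 1) ω
      = (∏ k ∈ ({0, 1} : Finset (Fin 4)), pathA d n Θ j k ω)
        * (∏ k ∈ ({0, 1} : Finset (Fin 4)), X (j k (Fin.last n)) ω) := by
    intro ω
    rw [Finset.prod_pair (by decide), Finset.prod_pair (by decide)]
    simp only [pathProd, pathA]
    ring
  have hQ : ∀ ω, pathProd d n Θ X (j 2) (j 3) ω
      = (∏ k ∈ ({2, 3} : Finset (Fin 4)), pathA d n Θ j k ω)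
        * (∏ k ∈ ({2, 3} : Finset (Fin 4)), X (j k (Fin.last n)) ω) := by
    intro ω
    rw [Finset.prod_pair (by decide), Finset.prod_pair (by decide)]
    simp only [pathProd, pathA]
    ring
  -- Step 7 : conclusion
  have hterm1 : (∫ ω, pathProd d n Θ X (j 0) (j 1) ω * pathProd d n Θ X (j 2) (j 3) ω ∂μ)
      = 0 := by
    rw [integral_congr_ae (Filter.Eventually.of_forall hPQ), hsplit Finset.univ, hPQzero,
      zero_mul]
  have hterm2 : (∫ ω, pathProd d n Θ X (j 0) (j 1) ω ∂μ)
      * (∫ ω, pathProd d n Θ X (j 2) (j 3) ω ∂μ) = 0 := by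
    rw [integral_congr_ae (Filter.Eventually.of_forall hP),
      integral_congr_ae (Filter.Eventually.of_forall hQ),
      hsplit ({0, 1} : Finset (Fin 4)), hsplit ({2, 3} : Finset (Fin 4))]
    rcases hPor with h | h <;> rw [h] <;> ring
  rw [hterm1, hterm2, sub_zero]

end
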